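/- Let n ≥ 2 be a natural number with gcd(n, 6) = 1, let k be coprime to n, and let x = (↑(k/n) : 𝕋). Then the joint forward orbit O(x) = {2^i • (3^j • x) : i, j ∈ ℕ} is a finite invariant set which is minimal: every nonempty invariant subset of O(x) equals O(x). -/

import Mathlib

open MeasureTheory

noncomputable section

/-- The circle `[0,1]` with endpoints identified. -/
abbrev 𝕋 := AddCircle (1 : ℝ)

instance : IsProbabilityMeasure (volume : Measure 𝕋) :=
  ⟨by simp [AddCircle.measure_univ]⟩

/-- The doubling map. -/
def T (x : 𝕋) : 𝕋 := 2 • x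

/-- The tripling map. -/
def S (x : 𝕋) : 𝕋 := 3 • x

/-- A set is invariant if it is forward invariant under both `T` and `S`. -/
def Invariant (O : Set 𝕋) : Prop := T '' O ⊆ O ∧ S '' O ⊆ O

/-- A nonempty finite invariant set is minimal if every nonempty invariant subset equals it. -/
def MinimalInvariant (O : Set 𝕋) : Prop :=
  O.Nonempty ∧ O.Finite ∧ Invariant O ∧
    ∀ O' ⊆ O, O'.Nonempty → Invariant O' → O' = O

/-- A measure is invariant if both `T` and `S` are measure preserving for it. -/
def InvariantMeasure (μ : Measure 𝕋) : Prop :=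
  MeasurePreserving T μ μ ∧ MeasurePreserving S μ μ

/-- The normalized counting measure on a set: each point of a finite set `O`
gets mass `1 / |O|`. -/
def normCount (O : Set 𝕋) : Measure 𝕋 :=
  (O.ncard : ENNReal)⁻¹ • Measure.count.restrict O

/-- `Fn n` is the set of points `i/n` of the circle with `0 < i < n`. -/
def Fn (n : ℕ) : Set 𝕋 := {x : 𝕋 | ∃ i : ℕ, 0 < i ∧ i < n ∧ x = ((i : ℝ) / n : ℝ)}

/-- For `n ≥ 2` coprime with `6` and `k` coprime with `n`, the joint forward orbit of
`k/n` under multiplication by `2` and `3` is a finite, invariant, minimal set. -/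
lemma coe_nsmul' (c : ℕ) (r : ℝ) : c • ((r : ℝ) : 𝕋) = (((c : ℝ) * r : ℝ) : 𝕋) := by
  rw [← nsmul_eq_mul]
  exact (map_nsmul (QuotientAddGroup.mk' (AddSubgroup.zmultiples (1:ℝ))) c r).symm

lemma coe_cong (n m1 m2 : ℕ) (hn : 0 < n) (h : m1 ≡ m2 [MOD n]) :
    (((m1 : ℝ) / n : ℝ) : 𝕋) = (((m2 : ℝ) / n : ℝ) : 𝕋) := by
  obtain ⟨c, hc⟩ := Nat.modEq_iff_dvd.mp h
  rw [QuotientAddGroup.eq_iff_sub_mem]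
  refine ⟨-c, ?_⟩
  have hn' : (n : ℝ) ≠ 0 := Nat.cast_ne_zero.mpr hn.ne'
  have : ((m2 : ℝ) - m1) = (n : ℝ) * c := by exact_mod_cast congrArg (Int.cast : ℤ → ℝ) hc
  field_simp
  simp only [zsmul_eq_mul, Int.cast_neg, mul_one]
  linarith [this]

lemma orbit_point (n k i j : ℕ) :
    (2 ^ i : ℕ) • ((3 ^ j : ℕ) • ((((k : ℝ) / n : ℝ)) : 𝕋)) =
      (((2 ^ i * 3 ^ j * k : ℕ) : ℝ) / n : ℝ) := by
  rw [coe_nsmul', coe_nsmul']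
  push_cast
  ring_nf

lemma orbit_point4 (n k p q r s : ℕ) :
    (2 ^ p : ℕ) • ((3 ^ q : ℕ) • ((2 ^ r : ℕ) • ((3 ^ s : ℕ) • ((((k : ℝ) / n : ℝ)) : 𝕋)))) =
      (((2 ^ (p + r) * 3 ^ (q + s) * k : ℕ) : ℝ) / n : ℝ) := by
  rw [coe_nsmul', coe_nsmul', coe_nsmul', coe_nsmul']
  push_cast
  ring_nf

lemma iter_mem {O' : Set 𝕋} (hinv : Invariant O') {y : 𝕋} (hy : y ∈ O') (i j : ℕ) :
    (2 ^ i : ℕ) • ((3 ^ j : ℕ) • y) ∈ O' := by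
  have h3 : ∀ m : ℕ, (3 ^ m : ℕ) • y ∈ O' := by
    intro m
    induction m with
    | zero => simpa using hy
    | succ m ih =>
      have : (3 ^ (m + 1) : ℕ) • y = S ((3 ^ m : ℕ) • y) := by
        rw [pow_succ, mul_comm, mul_smul]; rfl
      rw [this]
      exact hinv.2 ⟨_, ih, rfl⟩
  induction i with
  | zero => simpa using h3 j
  | succ i ih =>
    have : (2 ^ (i + 1) : ℕ) • ((3 ^ j : ℕ) • y) = T ((2 ^ i : ℕ) • ((3 ^ j : ℕ) • y)) := by
      rw [pow_succ, mul_comm, mul_smul]; rfl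
    rw [this]
    exact hinv.1 ⟨_, ih, rfl⟩

theorem orbit_of_fraction_minimal (n k : ℕ) (hn : 2 ≤ n) (h6 : Nat.gcd n 6 = 1)
    (hk : Nat.Coprime k n) (x : 𝕋) (hx : x = ((k : ℝ) / (n : ℝ) : ℝ))
    (O : Set 𝕋) (hO : O = {y : 𝕋 | ∃ i j : ℕ, y = 2 ^ i • (3 ^ j • x)}) :
    O.Finite ∧ Invariant O ∧ ∀ O' ⊆ O, O'.Nonempty → Invariant O' → O' = O := by
  have hn0 : 0 < n := by omega
  have hpt : ∀ i j : ℕ, (2 ^ i : ℕ) • ((3 ^ j : ℕ) • x) =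
      ((((2 ^ i * 3 ^ j * k : ℕ) : ℝ) / n : ℝ) : 𝕋) := by
    intro i j; rw [hx]; exact orbit_point n k i j
  -- coprimality of 2 and 3 with n
  have hc2 : Nat.Coprime 2 n := (Nat.Coprime.coprime_dvd_right (by norm_num : (2:ℕ) ∣ 6) h6).symm
  have hc3 : Nat.Coprime 3 n := (Nat.Coprime.coprime_dvd_right (by norm_num : (3:ℕ) ∣ 6) h6).symm
  set e := n.totient with he
  have he1 : 1 ≤ e := Nat.totient_pos.mpr hn0
  have h2e : 2 ^ e ≡ 1 [MOD n] := Nat.ModEq.pow_totient hc2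
  have h3e : 3 ^ e ≡ 1 [MOD n] := Nat.ModEq.pow_totient hc3
  refine ⟨?_, ⟨?_, ?_⟩, ?_⟩
  · -- finiteness
    apply Set.Finite.subset (Set.finite_range (fun m : Fin n => ((((m : ℕ) : ℝ) / n : ℝ) : 𝕋)))
    rintro y hy
    rw [hO] at hy
    obtain ⟨i, j, rfl⟩ := hy
    refine ⟨⟨(2 ^ i * 3 ^ j * k) % n, Nat.mod_lt _ hn0⟩, ?_⟩
    simp only []
    rw [hpt i j]
    exact coe_cong n _ _ hn0 (Nat.mod_modEq _ n)
  · -- T-invariance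
    rintro y ⟨z, hz, rfl⟩
    rw [hO] at hz ⊢
    obtain ⟨i, j, rfl⟩ := hz
    exact ⟨i + 1, j, by rw [T, pow_succ, mul_comm, mul_smul]⟩
  · -- S-invariance
    rintro y ⟨z, hz, rfl⟩
    rw [hO] at hz ⊢
    obtain ⟨i, j, rfl⟩ := hz
    refine ⟨i, j + 1, ?_⟩
    rw [S, smul_comm, pow_succ, mul_comm, mul_smul]
  · -- minimality
    rintro O' hsub ⟨y, hy⟩ hinv
    refine Set.Subset.antisymm hsub ?_
    have hyO := hsub hy
    rw [hO] at hyO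
    obtain ⟨a, b, hyab⟩ := hyO
    intro z hz
    rw [hO] at hz
    obtain ⟨i, j, rfl⟩ := hz
    have key : (2 ^ (i + a * (e - 1)) : ℕ) • ((3 ^ (j + b * (e - 1)) : ℕ) • y)
        = (2 ^ i : ℕ) • ((3 ^ j : ℕ) • x) := by
      rw [hyab, hx, orbit_point4, orbit_point n k i j]
      apply coe_cong n _ _ hn0
      have hae : i + a * (e - 1) + a = i + a * e := by
        have : a * (e - 1) + a = a * e := by
          rw [← Nat.mul_succ]; congr 1; omega
        omega
      have hbe : j + b * (e - 1) + b = j + b * e := by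
        have : b * (e - 1) + b = b * e := by
          rw [← Nat.mul_succ]; congr 1; omega
        omega
      rw [hae, hbe]
      calc 2 ^ (i + a * e) * 3 ^ (j + b * e) * k
          = (2 ^ i * (2 ^ e) ^ a) * (3 ^ j * (3 ^ e) ^ b) * k := by
            ring
        _ ≡ (2 ^ i * 1 ^ a) * (3 ^ j * 1 ^ b) * k [MOD n] := by
            exact (((Nat.ModEq.refl _).mul (h2e.pow a)).mul
              ((Nat.ModEq.refl _).mul (h3e.pow b))).mul (Nat.ModEq.refl k)
        _ = 2 ^ i * 3 ^ j * k := by ring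
    rw [← key]
    exact iter_mem hinv hy _ _
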